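/- Let $0 < p < 1$ and define $g_p(\alpha) = 2\, \frac{\alpha^{\alpha}}{(\alpha-1)^{\alpha-1}}\, p^{\alpha-1}(1-p) - 1$ for $\alpha > 1$. Then $g_p$ attains its maximum on $(1, \infty)$ at $\alpha_{\max} = \frac{1}{1-p}$, where $g_p(\alpha_{\max}) = 1$; moreover $g_p$ is strictly decreasing on $(\frac{1}{1-p}, \infty)$ and $\lim_{\alpha \to \infty} g_p(\alpha) = -1$. -/

import Mathlib

open Real Filter Set

/-- `g_p(α) = 2 α^α / (α-1)^(α-1) · p^(α-1) (1-p) - 1`, with real powers. -/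
noncomputable def gfun (p α : ℝ) : ℝ :=
  2 * (α ^ α / (α - 1) ^ (α - 1)) * p ^ (α - 1) * (1 - p) - 1

noncomputable def hfun (p α : ℝ) : ℝ :=
  Real.log 2 + α * Real.log α - (α - 1) * Real.log (α - 1)
    + (α - 1) * Real.log p + Real.log (1 - p)

lemma gfun_eq (p : ℝ) (hp : 0 < p) (hp1 : p < 1) {α : ℝ} (hα : 1 < α) :
    gfun p α = Real.exp (hfun p α) - 1 := by
  have h0 : (0:ℝ) < α := by linarith
  have h1 : (0:ℝ) < α - 1 := by linarith
  have hq : (0:ℝ) < 1 - p := by linarith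
  rw [gfun, hfun, rpow_def_of_pos h0, rpow_def_of_pos h1, rpow_def_of_pos hp,
    show (2:ℝ) = Real.exp (Real.log 2) by rw [Real.exp_log]; norm_num,
    show (1 - p) = Real.exp (Real.log (1 - p)) from (Real.exp_log hq).symm]
  rw [← Real.exp_sub, ← Real.exp_add, ← Real.exp_add, ← Real.exp_add]
  simp only [Real.log_exp]
  ring_nf

lemma hasDerivAt_hfun (p : ℝ) {α : ℝ} (hα : 1 < α) :
    HasDerivAt (hfun p) (Real.log p + Real.log α - Real.log (α - 1)) α := by
  have h0 : α ≠ 0 := by linarith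
  have h1 : α - 1 ≠ 0 := by intro h; linarith [sub_eq_zero.mp h]
  have d1 : HasDerivAt (fun x : ℝ => x * Real.log x) (Real.log α + 1) α :=
    Real.hasDerivAt_mul_log h0
  have dsub : HasDerivAt (fun x : ℝ => x - 1) 1 α := (hasDerivAt_id α).sub_const 1
  have d2 : HasDerivAt (fun x : ℝ => (x - 1) * Real.log (x - 1))
      ((Real.log (α - 1) + 1) * 1) α :=
    by have := (Real.hasDerivAt_mul_log h1).comp α dsub; exact this
  have d3 : HasDerivAt (fun x : ℝ => (x - 1) * Real.log p) (Real.log p) α := by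
    simpa using dsub.mul_const (Real.log p)
  have := (((((hasDerivAt_const α (Real.log 2)).add d1).sub d2).add d3).add
    (hasDerivAt_const α (Real.log (1 - p))))
  exact this.congr_deriv (by ring)

/-- `g_p` attains its maximum on `(1,∞)` at `1/(1-p)` with value `1`, is strictly
decreasing on `(1/(1-p), ∞)`, and tends to `-1` at infinity. -/
theorem claim_gfun_shape (p : ℝ) (hp : 0 < p) (hp1 : p < 1) :
    (∀ α ∈ Set.Ioi (1 : ℝ), gfun p α ≤ gfun p (1 / (1 - p))) ∧
    gfun p (1 / (1 - p)) = 1 ∧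
    StrictAntiOn (gfun p) (Set.Ioi (1 / (1 - p))) ∧
    Filter.Tendsto (gfun p) Filter.atTop (nhds (-1)) := by
  have hq : (0:ℝ) < 1 - p := by linarith
  set α₀ : ℝ := 1 / (1 - p) with hα₀def
  have hα₀ : 1 < α₀ := by rw [hα₀def, lt_div_iff₀ hq]; nlinarith
  -- value at α₀
  have hval : hfun p α₀ = Real.log 2 := by
    have ha1 : α₀ - 1 = p / (1 - p) := by rw [hα₀def]; field_simp; ring
    rw [hfun, ha1, hα₀def, one_div, Real.log_inv,
      Real.log_div hp.ne' hq.ne']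
    field_simp
    ring
  have hgval : gfun p α₀ = 1 := by
    rw [gfun_eq p hp hp1 hα₀, hval, Real.exp_log (by norm_num)]; norm_num
  -- strict anti on Ici α₀ for hfun
  have santi : StrictAntiOn (hfun p) (Set.Ici α₀) := by
    apply strictAntiOn_of_deriv_neg (convex_Ici _)
    · exact fun x hx => ((hasDerivAt_hfun p (lt_of_lt_of_le hα₀ hx)).continuousAt).continuousWithinAt
    · intro x hx
      rw [interior_Ici] at hx
      have hx1 : 1 < x := lt_trans hα₀ hx
      rw [(hasDerivAt_hfun p hx1).deriv]
      have h2 : 1 < x * (1 - p) := by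
        have hxgt : 1 / (1 - p) < x := hx
        rw [div_lt_iff₀ hq] at hxgt; linarith
      have hpx : p * x < x - 1 := by nlinarith
      have hpx0 : 0 < p * x := by positivity
      rw [← Real.log_mul hp.ne' (by linarith : x ≠ 0)]
      have := Real.log_lt_log hpx0 hpx
      linarith
  -- strict mono on Ioc 1 α₀ for hfun
  have smono : StrictMonoOn (hfun p) (Set.Ioc 1 α₀) := by
    apply strictMonoOn_of_deriv_pos (convex_Ioc _ _)
    · exact fun x hx => ((hasDerivAt_hfun p hx.1).continuousAt).continuousWithinAt
    · intro x hx
      rw [interior_Ioc] at hx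
      have hx1 : 1 < x := hx.1
      rw [(hasDerivAt_hfun p hx1).deriv]
      have h2 : x * (1 - p) < 1 := by
        have hxlt : x < 1 / (1 - p) := hx.2
        rw [lt_div_iff₀ hq] at hxlt; linarith
      have hpx : x - 1 < p * x := by nlinarith
      rw [← Real.log_mul hp.ne' (by linarith : x ≠ 0)]
      have := Real.log_lt_log (by linarith) hpx
      linarith
  refine ⟨?_, hgval, ?_, ?_⟩
  · intro α hα
    have hα1 : (1:ℝ) < α := hα
    rw [gfun_eq p hp hp1 hα1, gfun_eq p hp hp1 hα₀]
    rcases le_total α α₀ with hle | hle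
    · have := smono.monotoneOn ⟨hα1, hle⟩ ⟨hα₀, le_refl _⟩ hle
      exact sub_le_sub_right (Real.exp_le_exp.mpr this) 1
    · have := santi.antitoneOn (self_mem_Ici) hle hle
      exact sub_le_sub_right (Real.exp_le_exp.mpr this) 1
  · intro x hx y hy hxy
    rw [gfun_eq p hp hp1 (lt_trans hα₀ hx), gfun_eq p hp hp1 (lt_trans hα₀ hy)]
    exact sub_lt_sub_right (Real.exp_lt_exp.mpr (santi (Set.Ioi_subset_Ici_self hx) (Set.Ioi_subset_Ici_self hy) hxy)) 1
  · -- limit at infinity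
    have t1 : Tendsto (fun α : ℝ => α - 1) atTop atTop :=
      tendsto_atTop_add_const_right _ _ tendsto_id
    have tlog : Tendsto (fun x : ℝ => Real.log x / x) atTop (nhds 0) :=
      Real.isLittleO_log_id_atTop.tendsto_div_nhds_zero
    have t2 : Tendsto (fun α : ℝ => Real.log (α - 1) / (α - 1) + Real.log p)
        atTop (nhds (0 + Real.log p)) := ((tlog.comp t1).add tendsto_const_nhds)
    have hlogp : Real.log p < 0 := Real.log_neg hp hp1
    have t3 : Tendsto (fun α : ℝ => (α - 1) * (Real.log (α - 1) / (α - 1) + Real.log p))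
        atTop atBot := Tendsto.atTop_mul_neg (by linarith) t1 t2
    have hb : Tendsto (fun α : ℝ => (Real.log 2 + Real.log (1 - p) + 2)
        + (α - 1) * (Real.log (α - 1) / (α - 1) + Real.log p)) atTop atBot :=
      tendsto_atBot_add_const_left _ _ t3
    have hev : ∀ᶠ α in atTop, hfun p α ≤ (Real.log 2 + Real.log (1 - p) + 2)
        + (α - 1) * (Real.log (α - 1) / (α - 1) + Real.log p) := by
      filter_upwards [eventually_ge_atTop (2:ℝ)] with α hα2
      have h1 : (0:ℝ) < α - 1 := by linarith
      have key : α * (Real.log α - Real.log (α - 1)) ≤ 2 := by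
        rw [← Real.log_div (by linarith) h1.ne']
        have hdpos : 0 < α / (α - 1) := by positivity
        have hle : Real.log (α / (α - 1)) ≤ α / (α - 1) - 1 :=
          Real.log_le_sub_one_of_pos hdpos
        have h3 : α / (α - 1) - 1 = 1 / (α - 1) := by field_simp; ring
        have h4 : α * (1 / (α - 1)) ≤ 2 := by
          rw [mul_one_div, div_le_iff₀ h1]; linarith
        calc α * Real.log (α / (α - 1)) ≤ α * (1 / (α - 1)) := by
              apply mul_le_mul_of_nonneg_left _ (by linarith)
              rw [← h3]; exact hle
          _ ≤ 2 := h4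
      have hsplit : hfun p α = Real.log 2 + Real.log (1 - p)
          + α * (Real.log α - Real.log (α - 1))
          + (α - 1) * (Real.log (α - 1) / (α - 1) + Real.log p) := by
        rw [hfun]; field_simp; ring
      rw [hsplit]; linarith
    have hh : Tendsto (hfun p) atTop atBot := tendsto_atBot_mono' atTop hev hb
    have : Tendsto (fun α => Real.exp (hfun p α) - 1) atTop (nhds (0 - 1)) :=
      (Real.tendsto_exp_atBot.comp hh).sub_const 1
    rw [show (0:ℝ) - 1 = -1 by norm_num] at this
    apply this.congr'
    filter_upwards [eventually_gt_atTop (1:ℝ)] with α hα1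
    exact (gfun_eq p hp hp1 hα1).symm
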